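/- arXiv:2406.01510 — 4 statements merged into one kernel-verified Lean document; each statement's English description precedes it below -/
import Mathlib

section
/- A polynomial f in n variables is quasisymmetric if and only if R_1(f) = R_2(f) = ... = R_n(f), where R_i(f) is obtained from f by setting x_i = 0 and shifting x_j to x_{j-1} for all j > i. -/
open MvPolynomial

/-- The Bergeron–Sottile map `R i` (1-based `i`): set the variable `x_i` to zero
and shift every later variable down by one.  Variables are 0-indexed: `X j`
represents `x_{j+1}`. -/
noncomputable def R (i : ℕ) : MvPolynomial ℕ ℤ →ₐ[ℤ] MvPolynomial ℕ ℤ :=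
  aeval (fun j => if j + 1 < i then X j else if j + 1 = i then 0 else X (j - 1))

/-- `f` only involves the variables `x_1, …, x_n`. -/
def InVars (n : ℕ) (f : MvPolynomial ℕ ℤ) : Prop :=
  ∀ d ∈ f.support, ∀ j, n ≤ j → d j = 0

/-- `f` is a quasisymmetric polynomial in the variables `x_1, …, x_n`:
for any exponents `a_1, …, a_k ≥ 1`, the coefficients of
`x_{i_1}^{a_1} ⋯ x_{i_k}^{a_k}` and `x_{j_1}^{a_1} ⋯ x_{j_k}^{a_k}` agree for all
strictly increasing choices of indices among the first `n` variables. -/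
def IsQSym (n : ℕ) (f : MvPolynomial ℕ ℤ) : Prop :=
  ∀ (k : ℕ) (a : Fin k → ℕ), (∀ l, 1 ≤ a l) →
    ∀ (i j : Fin k → ℕ), StrictMono i → StrictMono j →
      (∀ l, i l < n) → (∀ l, j l < n) →
      coeff (∑ l, Finsupp.single (i l) (a l)) f =
        coeff (∑ l, Finsupp.single (j l) (a l)) f

def insm (p : ℕ) : ℕ → ℕ := fun t => if t < p then t else t + 1

lemma insm_injective (p : ℕ) : Function.Injective (insm p) := by
  intro a b h; simp only [insm] at h; split_ifs at h <;> omega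

lemma insm_strictMono (p : ℕ) : StrictMono (insm p) := by
  intro a b h; simp only [insm]; split_ifs <;> omega

noncomputable def ins (p : ℕ) (e : ℕ →₀ ℕ) : ℕ →₀ ℕ := Finsupp.mapDomain (insm p) e

lemma ins_apply_insm (p : ℕ) (e : ℕ →₀ ℕ) (t : ℕ) : ins p e (insm p t) = e t :=
  Finsupp.mapDomain_apply (insm_injective p) e t

lemma ins_apply_self (p : ℕ) (e : ℕ →₀ ℕ) : ins p e p = 0 := by
  apply Finsupp.mapDomain_notin_range
  rintro ⟨t, ht⟩
  simp only [insm] at ht; split_ifs at ht <;> omega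

lemma ins_injective (p : ℕ) : Function.Injective (ins p) :=
  Finsupp.mapDomain_injective (insm_injective p)

lemma R_rename (p : ℕ) (g : MvPolynomial ℕ ℤ) : _root_.R (p+1) (rename (insm p) g) = g := by
  have h : (_root_.R (p+1)).comp (rename (insm p) : MvPolynomial ℕ ℤ →ₐ[ℤ] _) = AlgHom.id ℤ _ := by
    apply algHom_ext
    intro j
    simp only [AlgHom.comp_apply, rename_X, AlgHom.id_apply, _root_.R, aeval_X, _root_.R, insm]
    split_ifs <;> first | rfl | omega | (congr 1; omega)
  calc _root_.R (p+1) (rename (insm p) g) = ((_root_.R (p+1)).comp (rename (insm p))) g := rfl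
    _ = g := by rw [h]; rfl

lemma R_monomial_ins (p : ℕ) (e : ℕ →₀ ℕ) (c : ℤ) :
    R (p+1) (monomial (ins p e) c) = monomial e c := by
  rw [show (monomial (ins p e) c : MvPolynomial ℕ ℤ) = rename (insm p) (monomial e c) from
    (rename_monomial _ _ _).symm]
  exact R_rename p _

lemma R_monomial_ne (p : ℕ) (d : ℕ →₀ ℕ) (c : ℤ) (hd : d p ≠ 0) :
    R (p+1) (monomial d c) = 0 := by
  simp only [_root_.R, aeval_monomial]
  rw [Finsupp.prod, Finset.prod_eq_zero (Finsupp.mem_support_iff.2 hd), mul_zero]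
  simp [zero_pow hd]

lemma exists_ins (p : ℕ) (d : ℕ →₀ ℕ) (hd : d p = 0) : ∃ e, d = ins p e := by
  refine ⟨Finsupp.comapDomain (insm p) d (insm_injective p).injOn, ?_⟩
  ext t
  by_cases htp : t = p
  · subst htp; rw [hd, ins_apply_self]
  · have h : insm p (if t < p then t else t - 1) = t := by
      simp only [insm]; split_ifs <;> omega
    rw [← h, ins_apply_insm, Finsupp.comapDomain_apply, h]

lemma coeff_R (p : ℕ) (f : MvPolynomial ℕ ℤ) (e : ℕ →₀ ℕ) :
    coeff e (R (p+1) f) = coeff (ins p e) f := by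
  induction f using MvPolynomial.induction_on' with
  | monomial d c =>
    by_cases hd : d p = 0
    · obtain ⟨e', rfl⟩ := exists_ins p d hd
      rw [R_monomial_ins, coeff_monomial, coeff_monomial]
      simp [(ins_injective p).eq_iff]
    · rw [R_monomial_ne p d c hd, coeff_zero, coeff_monomial, if_neg]
      intro h
      exact hd (h ▸ ins_apply_self p e)
  | add f g hf hg => simp [map_add, coeff_add, hf, hg]

lemma ins_sum (p : ℕ) {k : ℕ} (ι : Fin k → ℕ) (a : Fin k → ℕ) :
    ins p (∑ l, Finsupp.single (ι l) (a l)) = ∑ l, Finsupp.single (insm p (ι l)) (a l) := by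
  unfold ins
  rw [Finsupp.mapDomain_finset_sum]
  exact Finset.sum_congr rfl fun l _ => Finsupp.mapDomain_single

lemma finsupp_eq_sum (e : ℕ →₀ ℕ) :
    e = ∑ l : Fin e.support.card,
      Finsupp.single ((e.support.orderIsoOfFin rfl l : ℕ)) (e ((e.support.orderIsoOfFin rfl l : ℕ))) := by
  conv_lhs => rw [← Finsupp.sum_single e]
  rw [Finsupp.sum, ← Finset.sum_coe_sort e.support (fun t => Finsupp.single t (e t))]
  exact (Equiv.sum_comp (e.support.orderIsoOfFin rfl).toEquiv
    (fun t : e.support => Finsupp.single (t : ℕ) (e (t : ℕ)))).symm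

lemma qsym_forward (n : ℕ) (f : MvPolynomial ℕ ℤ) (hf : InVars n f) (hq : IsQSym n f)
    (p q : ℕ) (hp : p < n) (hq2 : q < n) (e : ℕ →₀ ℕ) :
    coeff (ins p e) f = coeff (ins q e) f := by
  by_cases hbig : ∃ t ∈ e.support, n ≤ t + 1
  · obtain ⟨t, ht, htn⟩ := hbig
    have key : ∀ r, r < n → coeff (ins r e) f = (0:ℤ) := by
      intro r hr
      by_contra h
      have hmem : ins r e ∈ f.support := MvPolynomial.mem_support_iff.2 h
      have h2 := hf _ hmem (t+1) htn
      have h3 : insm r t = t + 1 := by simp only [insm]; split_ifs <;> omega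
      rw [← h3, ins_apply_insm] at h2
      exact Finsupp.mem_support_iff.1 ht h2
    rw [key p hp, key q hq2]
  · push_neg at hbig
    set k := e.support.card with hk
    set ι : Fin k → ℕ := fun l => ((e.support.orderIsoOfFin rfl l : ℕ)) with hι
    have hιmem : ∀ l, ι l ∈ e.support := fun l => (e.support.orderIsoOfFin rfl l).2
    have ha : ∀ l : Fin k, 1 ≤ e (ι l) := fun l =>
      Nat.one_le_iff_ne_zero.2 (Finsupp.mem_support_iff.1 (hιmem l))
    have hmono : StrictMono ι := by
      intro a b hab
      exact Subtype.coe_lt_coe.2 ((e.support.orderIsoOfFin rfl).strictMono hab)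
    have hib : ∀ r, r < n → ∀ l, insm r (ι l) < n := by
      intro r hr l
      have := hbig (ι l) (hιmem l)
      simp only [insm]; split_ifs <;> omega
    rw [finsupp_eq_sum e, ins_sum, ins_sum]
    exact hq k (fun l => e (ι l)) ha (fun l => insm p (ι l)) (fun l => insm q (ι l))
      ((insm_strictMono p).comp hmono) ((insm_strictMono q).comp hmono)
      (hib p hp) (hib q hq2)

lemma le_apply_of_strictMono {k : ℕ} {i : Fin k → ℕ} (h : StrictMono i) (l : Fin k) :
    (l : ℕ) ≤ i l := by
  have H : ∀ m (hm : m < k), m ≤ i ⟨m, hm⟩ := by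
    intro m
    induction m with
    | zero => intro hm; exact Nat.zero_le _
    | succ m ih =>
      intro hm
      have h1 := ih (Nat.lt_of_succ_lt hm)
      have h2 : i ⟨m, Nat.lt_of_succ_lt hm⟩ < i ⟨m+1, hm⟩ := h (by simp [Fin.lt_def])
      omega
  simpa using H l.val l.isLt

lemma coeff_packed (n : ℕ) (f : MvPolynomial ℕ ℤ)
    (H : ∀ p q, p < n → q < n → ∀ e, coeff (ins p e) f = coeff (ins q e) f) :
    ∀ (N k : ℕ) (a i : Fin k → ℕ), StrictMono i → (∀ l, i l < n) → (∑ l, i l) ≤ N →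
      coeff (∑ l, Finsupp.single (i l) (a l)) f
        = coeff (∑ l, Finsupp.single (l.val) (a l)) f := by
  intro N
  induction N with
  | zero =>
    intro k a i hmono hbound hsum
    have hid : ∀ l, i l = (l : ℕ) := by
      intro l
      have h0 : i l = 0 :=
        Finset.sum_eq_zero_iff.1 (Nat.le_zero.1 hsum) l (Finset.mem_univ l)
      have := le_apply_of_strictMono hmono l
      omega
    exact congrArg (fun m => coeff m f) (Finset.sum_congr rfl fun l _ => by rw [hid l])
  | succ N ih =>
    intro k a i hmono hbound hsum
    by_cases hid : ∀ l, i l = (l : ℕ)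
    · exact congrArg (fun m => coeff m f) (Finset.sum_congr rfl fun l _ => by rw [hid l])
    · push_neg at hid
      set s : Finset (Fin k) := Finset.univ.filter (fun l => i l ≠ (l : ℕ)) with hs
      have hne : s.Nonempty := by obtain ⟨l, hl⟩ := hid; exact ⟨l, by simp [hs, hl]⟩
      set l₀ := s.min' hne with hl₀
      have hl₀mem : i l₀ ≠ (l₀ : ℕ) := by
        have := s.min'_mem hne; simp only [hs, Finset.mem_filter] at this; exact this.2
      have hmin : ∀ l : Fin k, (l : ℕ) < (l₀ : ℕ) → i l = (l : ℕ) := by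
        intro l hl
        by_contra hc
        have h2 : (l₀ : ℕ) ≤ (l : ℕ) :=
          Fin.le_def.1 (s.min'_le l (by simp [hs, hc]))
        omega
      have hge : (l₀ : ℕ) + 1 ≤ i l₀ := by
        have := le_apply_of_strictMono hmono l₀; omega
      set p := i l₀ - 1 with hp
      have hpn : p < n := by have := hbound l₀; omega
      set i' : Fin k → ℕ := fun l => if (l : ℕ) < (l₀ : ℕ) then i l else i l - 1 with hi'
      have hins : ∀ l, insm p (i' l) = i l := by
        intro l
        by_cases hc : (l : ℕ) < (l₀ : ℕ)
        · have h1 : i l = (l : ℕ) := hmin l hc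
          simp only [hi', insm, if_pos hc]
          rw [if_pos (by omega)]
        · have h2 : i l₀ ≤ i l := hmono.monotone (by rw [Fin.le_def]; omega)
          simp only [hi', insm, if_neg hc]
          rw [if_neg (by omega)]
          omega
      have hmono' : StrictMono i' := by
        intro l l' hll'
        have h1 := hmono hll'
        have hll2 : (l : ℕ) < (l' : ℕ) := hll'
        simp only [hi']
        split_ifs with c1 c2 c2
        · exact h1
        · have h3 : i l = (l : ℕ) := hmin l c1
          have h4 : i l₀ ≤ i l' := hmono.monotone (by rw [Fin.le_def]; omega)
          omega
        · omega
        · have h4 : i l₀ ≤ i l := hmono.monotone (by rw [Fin.le_def]; omega)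
          omega
      have hbound' : ∀ l, i' l + 1 < n := by
        intro l
        by_cases hc : (l : ℕ) < (l₀ : ℕ)
        · have h1 : i l = (l : ℕ) := hmin l hc
          have h5 := hbound l₀
          simp only [hi', if_pos hc]; omega
        · have h5 := hbound l
          have h2 : i l₀ ≤ i l := hmono.monotone (by rw [Fin.le_def]; omega)
          simp only [hi', if_neg hc]
          omega
      have hsum' : (∑ l, i' l) ≤ N := by
        have hlt : (∑ l, i' l) < ∑ l, i l := by
          apply Finset.sum_lt_sum
          · intro l _; simp only [hi']; split_ifs <;> omega
          · exact ⟨l₀, Finset.mem_univ _, by simp only [hi', if_neg (lt_irrefl _)]; omega⟩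
        omega
      have step1 : (∑ l, Finsupp.single (i l) (a l))
          = ins p (∑ l, Finsupp.single (i' l) (a l)) := by
        rw [ins_sum]
        exact (Finset.sum_congr rfl fun l _ => by rw [hins l]).symm
      have step2 : ins (n-1) (∑ l, Finsupp.single (i' l) (a l))
          = ∑ l, Finsupp.single (i' l) (a l) := by
        rw [ins_sum]
        refine Finset.sum_congr rfl fun l _ => ?_
        have h6 := hbound' l
        simp only [insm]
        rw [if_pos (by omega)]
      have hn1 : n - 1 < n := by have := hbound l₀; omega
      calc coeff (∑ l, Finsupp.single (i l) (a l)) f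
          = coeff (ins p (∑ l, Finsupp.single (i' l) (a l))) f := by rw [← step1]
        _ = coeff (ins (n-1) (∑ l, Finsupp.single (i' l) (a l))) f := H p (n-1) hpn hn1 _
        _ = coeff (∑ l, Finsupp.single (i' l) (a l)) f := by rw [step2]
        _ = _ := ih k a i' hmono' (fun l => by have := hbound' l; omega) hsum'

/-- A polynomial in `n` variables is quasisymmetric if and only
if `R_1 f = R_2 f = ⋯ = R_n f`. -/
theorem qsym_iff_R_eq (n : ℕ) (f : MvPolynomial ℕ ℤ) (hf : InVars n f) :
    IsQSym n f ↔ ∀ i j, 1 ≤ i → i ≤ n → 1 ≤ j → j ≤ n → R i f = R j f := by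
  constructor
  · intro hq i j hi1 hin hj1 hjn
    obtain ⟨p, rfl⟩ : ∃ p, i = p + 1 := ⟨i - 1, by omega⟩
    obtain ⟨q, rfl⟩ : ∃ q, j = q + 1 := ⟨j - 1, by omega⟩
    apply MvPolynomial.ext
    intro e
    rw [coeff_R, coeff_R]
    exact qsym_forward n f hf hq p q (by omega) (by omega) e
  · intro H k a ha i j hi hj hin hjn
    have H' : ∀ p q, p < n → q < n → ∀ e, coeff (ins p e) f = coeff (ins q e) f := by
      intro p q hp hq e
      rw [← coeff_R, ← coeff_R, H (p+1) (q+1) (by omega) (by omega) (by omega) (by omega)]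
    rw [coeff_packed n f H' (∑ l, i l) k a i hi hin le_rfl,
        coeff_packed n f H' (∑ l, j l) k a j hj hjn le_rfl]
end

section
/- The Hivert quasisymmetrizing characterization: f ∈ ℤ[x_1,...,x_n] is quasisymmetric if and only if f = σ_1·f = ... = σ_{n-1}·f, where σ_i acts on a monomial x^c by swapping exponents c_i and c_{i+1} if either c_i = 0 or c_{i+1} = 0, and fixes the monomial otherwise. -/
open MvPolynomial

/-- Hivert's quasisymmetrizing operator `σ_i` (1-based `i`): on a monomial
`x^c` it swaps the exponents `c_i` and `c_{i+1}` (positions `i-1`, `i` in the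
0-based indexing) if one of them is zero, and fixes the monomial otherwise. -/
noncomputable def sigma (i : ℕ) (f : MvPolynomial ℕ ℤ) : MvPolynomial ℕ ℤ :=
  ∑ d ∈ f.support,
    if d (i - 1) = 0 ∨ d i = 0 then
      monomial (Finsupp.equivMapDomain (Equiv.swap (i - 1) i) d) (coeff d f)
    else monomial d (coeff d f)

noncomputable def T (i : ℕ) (d : ℕ →₀ ℕ) : ℕ →₀ ℕ :=
  if d (i - 1) = 0 ∨ d i = 0 then Finsupp.equivMapDomain (Equiv.swap (i - 1) i) d else d

lemma swap_apply (a b : ℕ) (d : ℕ →₀ ℕ) (x : ℕ) :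
    Finsupp.equivMapDomain (Equiv.swap a b) d x = d (Equiv.swap a b x) := by
  rw [Finsupp.equivMapDomain_apply, Equiv.symm_swap]

lemma swap_swap_finsupp (a b : ℕ) (d : ℕ →₀ ℕ) :
    Finsupp.equivMapDomain (Equiv.swap a b) (Finsupp.equivMapDomain (Equiv.swap a b) d) = d := by
  rw [← Finsupp.equivMapDomain_trans, Equiv.swap_swap, Finsupp.equivMapDomain_refl]

lemma T_invol (i : ℕ) (d : ℕ →₀ ℕ) : T i (T i d) = d := by
  unfold T
  by_cases h : d (i - 1) = 0 ∨ d i = 0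
  · rw [if_pos h]
    have h1 : (Finsupp.equivMapDomain (Equiv.swap (i - 1) i) d) (i - 1) = d i := by
      rw [swap_apply, Equiv.swap_apply_left]
    have h2 : (Finsupp.equivMapDomain (Equiv.swap (i - 1) i) d) i = d (i - 1) := by
      rw [swap_apply, Equiv.swap_apply_right]
    rw [if_pos (by rw [h1, h2]; exact h.symm), swap_swap_finsupp]
  · rw [if_neg h, if_neg h]

lemma coeff_sigma (i : ℕ) (f : MvPolynomial ℕ ℤ) (e : ℕ →₀ ℕ) :
    coeff e (sigma i f) = coeff (T i e) f := by
  have hs : sigma i f = ∑ d ∈ f.support, monomial (T i d) (coeff d f) := by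
    apply Finset.sum_congr rfl
    intro d _
    unfold T
    by_cases h : d (i - 1) = 0 ∨ d i = 0
    · rw [if_pos h, if_pos h]
    · rw [if_neg h, if_neg h]
  rw [hs, coeff_sum]
  have : ∀ d ∈ f.support, coeff e (monomial (T i d) (coeff d f))
      = if d = T i e then coeff d f else 0 := by
    intro d _
    rw [coeff_monomial]
    congr 1
    apply propext
    constructor
    · rintro rfl; rw [T_invol]
    · rintro rfl; rw [T_invol]
  rw [Finset.sum_congr rfl this, Finset.sum_ite_eq' f.support (T i e) (fun d => coeff d f)]
  by_cases h : T i e ∈ f.support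
  · rw [if_pos h]
  · rw [if_neg h, eq_comm, ← MvPolynomial.notMem_support_iff]
    exact h

lemma sigma_eq_iff (i : ℕ) (f : MvPolynomial ℕ ℤ) :
    sigma i f = f ↔ ∀ e, coeff (T i e) f = coeff e f := by
  constructor
  · intro h e
    rw [← coeff_sigma, h]
  · intro h
    ext e
    rw [coeff_sigma, h]

lemma sum_enum {M : Type*} [AddCommMonoid M] (s : Finset ℕ) (k : ℕ) (h : s.card = k)
    (g : ℕ → M) : ∑ a ∈ s, g a = ∑ l : Fin k, g (s.orderEmbOfFin h l) := by
  refine (Finset.sum_bij (fun l _ => s.orderEmbOfFin h l) ?_ ?_ ?_ ?_).symm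
  · intro l _; exact Finset.orderEmbOfFin_mem s h l
  · intro l _ l' _ hll'
    exact (s.orderEmbOfFin h).injective hll'
  · intro b hb
    have : b ∈ Set.range (s.orderEmbOfFin h) := by
      rw [Finset.range_orderEmbOfFin]; exact hb
    obtain ⟨l, hl⟩ := this
    exact ⟨l, Finset.mem_univ l, hl⟩
  · intro l _; rfl

lemma repr_eq (e : ℕ →₀ ℕ) (k : ℕ) (h : e.support.card = k) :
    e = ∑ l : Fin k, Finsupp.single (e.support.orderEmbOfFin h l)
      (e (e.support.orderEmbOfFin h l)) := by
  conv_lhs => rw [← Finsupp.sum_single e]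
  rw [Finsupp.sum, sum_enum e.support k h (fun a => Finsupp.single a (e a))]

lemma coeff_zero_out (n : ℕ) (f : MvPolynomial ℕ ℤ) (hf : InVars n f) (e : ℕ →₀ ℕ)
    (t : ℕ) (ht : n ≤ t) (het : e t ≠ 0) : coeff e f = 0 := by
  by_contra h
  exact het (hf e (MvPolynomial.mem_support_iff.mpr h) t ht)

lemma one_step (n : ℕ) (f : MvPolynomial ℕ ℤ) (hq : IsQSym n f) (a : ℕ) (hb : a + 1 < n)
    (e : ℕ →₀ ℕ) (hsup : ∀ t, n ≤ t → e t = 0) (hea : e a = 0) :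
    coeff (Finsupp.equivMapDomain (Equiv.swap a (a + 1)) e) f = coeff e f := by
  set b := a + 1 with hbdef
  set e' := Finsupp.equivMapDomain (Equiv.swap a b) e with he'
  set s := e.support with hs
  set k := s.card with hk
  have has : a ∉ s := by simp [hs, Finsupp.mem_support_iff, hea]
  -- support of e'
  have hsupp' : e'.support = s.image (Equiv.swap a b) := by
    rw [he', Finsupp.equivMapDomain_eq_mapDomain,
      Finsupp.mapDomain_support_of_injective (Equiv.injective _)]
  have hcard' : e'.support.card = k := by
    rw [hsupp', Finset.card_image_of_injective _ (Equiv.injective _)]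
  set enum : Fin k → ℕ := fun l => s.orderEmbOfFin rfl l with henum
  set g : Fin k → ℕ := fun l => Equiv.swap a b (enum l) with hg
  have hswap_mono : ∀ x y, x ∈ s → y ∈ s → x < y →
      Equiv.swap a b x < Equiv.swap a b y := by
    intro x y hx hy hxy
    have hxa : x ≠ a := fun h => has (h ▸ hx)
    have hya : y ≠ a := fun h => has (h ▸ hy)
    rcases eq_or_ne y b with rfl | hyb
    · rw [Equiv.swap_apply_right]
      have hxb : x ≠ b := Nat.ne_of_lt hxy
      rw [Equiv.swap_apply_of_ne_of_ne hxa hxb]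
      omega
    · rw [Equiv.swap_apply_of_ne_of_ne hya hyb]
      rcases eq_or_ne x b with rfl | hxb
      · rw [Equiv.swap_apply_right]; omega
      · rw [Equiv.swap_apply_of_ne_of_ne hxa hxb]; exact hxy
  have henum_mem : ∀ l, enum l ∈ s := fun l => Finset.orderEmbOfFin_mem s rfl l
  have hg_mono : StrictMono g := by
    intro l l' hll'
    exact hswap_mono _ _ (henum_mem l) (henum_mem l')
      ((s.orderEmbOfFin rfl).strictMono hll')
  have hg_mem : ∀ l, g l ∈ e'.support := by
    intro l
    rw [hsupp']
    exact Finset.mem_image_of_mem _ (henum_mem l)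
  have hg_eq : g = e'.support.orderEmbOfFin hcard' :=
    Finset.orderEmbOfFin_unique hcard' hg_mem hg_mono
  have he'g : ∀ l, e' (g l) = e (enum l) := by
    intro l
    rw [he', swap_apply, hg, Equiv.swap_apply_self]
  have hlt : ∀ l, enum l < n := by
    intro l
    by_contra h
    exact Finsupp.mem_support_iff.mp (henum_mem l) (hsup _ (by omega))
  have hglt : ∀ l, g l < n := by
    intro l
    have hlt' := hlt l
    simp only [hg, Equiv.swap_apply_def]
    split_ifs <;> omega
  have key := hq k (fun l => e (enum l))
    (fun l => Nat.one_le_iff_ne_zero.mpr (Finsupp.mem_support_iff.mp (henum_mem l)))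
    enum g (s.orderEmbOfFin rfl).strictMono hg_mono hlt hglt
  have hrepr : e = ∑ l : Fin k, Finsupp.single (enum l) (e (enum l)) := repr_eq e k rfl
  have hrepr' : e' = ∑ l : Fin k, Finsupp.single (g l) (e (enum l)) := by
    have := repr_eq e' k hcard'
    rw [this]
    apply Finset.sum_congr rfl
    intro l _
    rw [← hg_eq, he'g]
  rw [← hrepr] at key
  rw [← hrepr'] at key
  exact key.symm

lemma forward (n : ℕ) (f : MvPolynomial ℕ ℤ) (hf : InVars n f) (hq : IsQSym n f)
    (i : ℕ) (h1 : 1 ≤ i) (h2 : i + 1 ≤ n) (e : ℕ →₀ ℕ) :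
    coeff (T i e) f = coeff e f := by
  obtain ⟨a, rfl⟩ : ∃ a, i = a + 1 := ⟨i - 1, by omega⟩
  unfold T
  simp only [Nat.add_sub_cancel]
  by_cases hcond : e a = 0 ∨ e (a + 1) = 0
  · rw [if_pos hcond]
    by_cases hout : ∃ t, n ≤ t ∧ e t ≠ 0
    · obtain ⟨t, ht, het⟩ := hout
      rw [coeff_zero_out n f hf e t ht het]
      apply coeff_zero_out n f hf _ t ht
      rw [swap_apply, Equiv.swap_apply_of_ne_of_ne (by omega) (by omega)]
      exact het
    · push_neg at hout
      have hsup : ∀ t, n ≤ t → e t = 0 := fun t ht => hout t ht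
      rcases hcond with hea | hei
      · exact one_step n f hq a (by omega) e hsup hea
      · set e' := Finsupp.equivMapDomain (Equiv.swap a (a + 1)) e with he'
        have hea' : e' a = 0 := by
          rw [he', swap_apply, Equiv.swap_apply_left]; exact hei
        have hsup' : ∀ t, n ≤ t → e' t = 0 := by
          intro t ht
          rw [he', swap_apply, Equiv.swap_apply_of_ne_of_ne (by omega) (by omega)]
          exact hsup t ht
        have key := one_step n f hq a (by omega) e' hsup' hea'
        rw [he', swap_swap_finsupp] at key
        exact key.symm
  · rw [if_neg hcond]

lemma fin_le_apply {k : ℕ} (i : Fin k → ℕ) (hmono : StrictMono i) :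
    ∀ l : Fin k, (l : ℕ) ≤ i l := by
  have key : ∀ m (h : m < k), m ≤ i ⟨m, h⟩ := by
    intro m
    induction m with
    | zero => intro h; exact Nat.zero_le _
    | succ m ih =>
      intro h
      have h1 : m < k := by omega
      have h2 : i ⟨m, h1⟩ < i ⟨m + 1, h⟩ :=
        hmono (show (⟨m, h1⟩ : Fin k) < ⟨m + 1, h⟩ from by simp [Fin.lt_def])
      have h3 := ih h1
      omega
  intro l
  have := key l.1 l.2
  simpa using this

lemma fsum_apply {ι : Type*} (s : Finset ι) (g : ι → (ℕ →₀ ℕ)) (t : ℕ) :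
    (∑ l ∈ s, g l) t = ∑ l ∈ s, g l t :=
  map_sum (Finsupp.applyAddHom t) g s

lemma packed (n : ℕ) (f : MvPolynomial ℕ ℤ)
    (H : ∀ t, t + 1 < n → ∀ e : ℕ →₀ ℕ, e t = 0 →
      coeff (Finsupp.equivMapDomain (Equiv.swap t (t + 1)) e) f = coeff e f) :
    ∀ (N k : ℕ) (a : Fin k → ℕ) (i : Fin k → ℕ), StrictMono i → (∀ l, i l < n) →
      (∑ l, i l) = N →
      coeff (∑ l, Finsupp.single (i l) (a l)) f
        = coeff (∑ l : Fin k, Finsupp.single (l : ℕ) (a l)) f := by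
  intro N
  induction N using Nat.strong_induction_on with
  | _ N IH =>
    intro k a i hmono hlt hsum
    by_cases hid : ∀ l : Fin k, i l = (l : ℕ)
    · have heq : (∑ l : Fin k, Finsupp.single (i l) (a l))
          = ∑ l : Fin k, Finsupp.single (l : ℕ) (a l) :=
        Finset.sum_congr rfl fun l _ => by rw [hid l]
      rw [heq]
    · push_neg at hid
      have hex : ∃ m : ℕ, ∃ h : m < k, i ⟨m, h⟩ ≠ m := by
        obtain ⟨l, hl⟩ := hid
        exact ⟨l.1, l.2, by simpa using hl⟩
      classical
      set m₀ := Nat.find hex with hm₀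
      obtain ⟨hm₀k, hm₀ne⟩ := Nat.find_spec hex
      set l₀ : Fin k := ⟨m₀, hm₀k⟩ with hl₀
      have hmin : ∀ l : Fin k, l < l₀ → i l = (l : ℕ) := by
        intro l hll
        have hlm : (l : ℕ) < m₀ := hll
        have hnp : ¬ ∃ h : (l : ℕ) < k, i ⟨(l : ℕ), h⟩ ≠ (l : ℕ) := Nat.find_min hex hlm
        push_neg at hnp
        have := hnp l.2
        simpa using this
      have hgt : (l₀ : ℕ) < i l₀ := by
        have h1 := fin_le_apply i hmono l₀
        have h2 : i l₀ ≠ (l₀ : ℕ) := hm₀ne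
        omega
      set t := i l₀ - 1 with ht
      have htt : t + 1 = i l₀ := by omega
      have htge : (l₀ : ℕ) ≤ t := by omega
      have htne : ∀ l, i l ≠ t := by
        intro l
        rcases lt_trichotomy l l₀ with h | h | h
        · rw [hmin l h]
          have : (l : ℕ) < (l₀ : ℕ) := h
          omega
        · rw [h]; omega
        · have := hmono h
          omega
      set i' : Fin k → ℕ := fun l => if l = l₀ then t else i l with hi'
      have hi'eq : ∀ l, l ≠ l₀ → i' l = i l := fun l h => if_neg h
      have hi'l₀ : i' l₀ = t := if_pos rfl
      have hmono' : StrictMono i' := by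
        intro l l' hll'
        rcases eq_or_ne l l₀ with rfl | hl
        · rw [hi'l₀, hi'eq l' (by exact (ne_of_gt hll'))]
          have := hmono hll'
          omega
        · rw [hi'eq l hl]
          rcases eq_or_ne l' l₀ with rfl | hl'
          · rw [hi'l₀, hmin l hll']
            have : (l : ℕ) < (l₀ : ℕ) := hll'
            omega
          · rw [hi'eq l' hl']
            exact hmono hll'
      have hlt' : ∀ l, i' l < n := by
        intro l
        rcases eq_or_ne l l₀ with rfl | hl
        · rw [hi'l₀]; have := hlt l₀; omega
        · rw [hi'eq l hl]; exact hlt l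
      have hsum' : (∑ l, i' l) + 1 = N := by
        rw [← hsum, ← Finset.add_sum_erase _ i (Finset.mem_univ l₀),
          ← Finset.add_sum_erase _ i' (Finset.mem_univ l₀), hi'l₀]
        have : ∑ l ∈ Finset.univ.erase l₀, i' l = ∑ l ∈ Finset.univ.erase l₀, i l :=
          Finset.sum_congr rfl fun l hl => hi'eq l (Finset.ne_of_mem_erase hl)
        rw [this]
        omega
      set e := ∑ l, Finsupp.single (i l) (a l) with he
      have het : e t = 0 := by
        rw [he, fsum_apply]
        apply Finset.sum_eq_zero
        intro l _
        exact Finsupp.single_eq_of_ne' (htne l)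
      have hswap : Finsupp.equivMapDomain (Equiv.swap t (t + 1)) e
          = ∑ l, Finsupp.single (i' l) (a l) := by
        rw [he, Finsupp.equivMapDomain_eq_mapDomain, Finsupp.mapDomain_finset_sum]
        apply Finset.sum_congr rfl
        intro l _
        rw [Finsupp.mapDomain_single]
        congr 1
        rcases eq_or_ne l l₀ with rfl | hl
        · rw [hi'l₀, ← htt, Equiv.swap_apply_right]
        · rw [hi'eq l hl, Equiv.swap_apply_of_ne_of_ne (htne l)
            (by rw [htt]; exact fun h => hl (hmono.injective h))]
      have hH := H t (by rw [htt]; exact hlt l₀) e het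
      rw [hswap] at hH
      rw [← hH]
      exact IH (N - 1) (by omega) k a i' hmono' hlt' (by omega)

/-- Hivert's characterization: `f ∈ ℤ[x_1,…,x_n]` is
quasisymmetric iff `f = σ_1 f = ⋯ = σ_{n-1} f`. -/
theorem qsym_iff_sigma_fixed (n : ℕ) (f : MvPolynomial ℕ ℤ) (hf : InVars n f) :
    IsQSym n f ↔ ∀ i, 1 ≤ i → i + 1 ≤ n → sigma i f = f := by
  constructor
  · intro hq i h1 h2
    exact (sigma_eq_iff i f).mpr (forward n f hf hq i h1 h2)
  · intro hσ
    have H : ∀ t, t + 1 < n → ∀ e : ℕ →₀ ℕ, e t = 0 →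
        coeff (Finsupp.equivMapDomain (Equiv.swap t (t + 1)) e) f = coeff e f := by
      intro t ht e het
      have hh := (sigma_eq_iff (t + 1) f).mp (hσ (t + 1) (by omega) (by omega)) e
      unfold T at hh
      simp only [Nat.add_sub_cancel] at hh
      rwa [if_pos (Or.inl het)] at hh
    intro k a ha i j hi hj hilt hjlt
    rw [packed n f H (∑ l, i l) k a i hi hilt rfl,
      packed n f H (∑ l, j l) k a j hj hjlt rfl]
end

section
/- Grouping the variables as x_{m(j-1)+r}, every m-quasisymmetric polynomial ring QSym^(m)_n is closed under multiplication; more precisely, f ∈ ℤ[x_1,...,x_n] lies in QSym^(m)_n if and only if R_1^m(f) = R_2^m(f) = ... = R_{n-m+1}^m(f), where R_i^m sets x_i = x_{i+1} = ... = x_{i+m-1} = 0 and shifts subsequent variables down by m. -/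
open MvPolynomial

/-- `f` is an `m`-quasisymmetric polynomial in `x_1, …, x_n`: for any exponents
`a_1, …, a_k ≥ 1` the coefficients of `x_{i_1}^{a_1} ⋯ x_{i_k}^{a_k}` and
`x_{j_1}^{a_1} ⋯ x_{j_k}^{a_k}` agree for strictly increasing index sequences
in `[n]` with `i_ℓ ≡ j_ℓ (mod m)` for all `ℓ`. -/
def IsMQSym (m n : ℕ) (f : MvPolynomial ℕ ℤ) : Prop :=
  ∀ (k : ℕ) (a : Fin k → ℕ), (∀ l, 1 ≤ a l) →
    ∀ (i j : Fin k → ℕ), StrictMono i → StrictMono j →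
      (∀ l, i l < n) → (∀ l, j l < n) → (∀ l, i l % m = j l % m) →
      coeff (∑ l, Finsupp.single (i l) (a l)) f =
        coeff (∑ l, Finsupp.single (j l) (a l)) f

/-- `R_i^m` (1-based `i`): set `x_i = x_{i+1} = ⋯ = x_{i+m-1} = 0` and shift
all later variables down by `m`. -/
noncomputable def Rm (m i : ℕ) : MvPolynomial ℕ ℤ →ₐ[ℤ] MvPolynomial ℕ ℤ :=
  aeval (fun j => if j + 1 < i then X j else if j + 1 < i + m then 0 else X (j - m))

namespace MQAux

/-- shift up by `m` from position `p` on -/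
def sh (m p j : ℕ) : ℕ := if j < p then j else j + m

/-- shift down by `m` from position `p` on -/
def sg (m p j : ℕ) : ℕ := if j < p then j else j - m

lemma sh_inj (m p : ℕ) : Function.Injective (sh m p) := by
  intro a b h
  unfold sh at h
  split_ifs at h <;> omega

lemma sh_strictMono (m p : ℕ) : StrictMono (sh m p) := by
  intro a b h
  unfold sh
  split_ifs <;> omega

lemma sh_mod (m p x : ℕ) : sh m p x % m = x % m := by
  unfold sh
  split_ifs
  · rfl
  · exact Nat.add_mod_right x m

lemma Rm_succ_eq (m p : ℕ) : Rm m (p+1) = aeval (fun j =>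
    if j < p then (X j : MvPolynomial ℕ ℤ) else if j < p + m then 0 else X (j - m)) := by
  unfold Rm
  congr 1
  funext j
  have h1 : (j + 1 < p + 1) ↔ (j < p) := by omega
  have h2 : (j + 1 < p + 1 + m) ↔ (j < p + m) := by omega
  simp only [h1, h2]

lemma prod_monomial (S : Finset ℕ) (u : ℕ → (ℕ →₀ ℕ)) :
    (∏ j ∈ S, (monomial (u j) (1:ℤ))) = monomial (∑ j ∈ S, u j) 1 := by
  classical
  induction S using Finset.induction with
  | empty => simp [monomial_zero']
  | @insert a s h ih => rw [Finset.prod_insert h, Finset.sum_insert h, ih, monomial_mul, one_mul]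

lemma sg_sh (m p : ℕ) : ∀ j, sg m p (sh m p j) = j := by
  intro j
  unfold sg sh
  split_ifs <;> omega

lemma mapDomain_sg_sh (m p : ℕ) (e : ℕ →₀ ℕ) :
    Finsupp.mapDomain (sg m p) (Finsupp.mapDomain (sh m p) e) = e := by
  rw [← Finsupp.mapDomain_comp]
  have : sg m p ∘ sh m p = id := funext fun j => sg_sh m p j
  rw [this, Finsupp.mapDomain_id]

lemma mapDomain_sh_sg (m p : ℕ) (d : ℕ →₀ ℕ)
    (hd : ∀ j ∈ d.support, j < p ∨ p + m ≤ j) :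
    Finsupp.mapDomain (sh m p) (Finsupp.mapDomain (sg m p) d) = d := by
  rw [← Finsupp.mapDomain_comp]
  rw [Finsupp.mapDomain_congr (g := id), Finsupp.mapDomain_id]
  intro j hj
  rcases hd j hj with h | h <;> (simp only [Function.comp, sh, sg, id]; split_ifs <;> omega)

lemma coeff_Rm (m p : ℕ) (f : MvPolynomial ℕ ℤ) (e : ℕ →₀ ℕ) :
    coeff e (Rm m (p+1) f) = coeff (Finsupp.mapDomain (sh m p) e) f := by
  induction f using MvPolynomial.induction_on' with
  | add f g hf hg => rw [map_add, coeff_add, coeff_add, hf, hg]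
  | monomial d c =>
    rw [Rm_succ_eq, aeval_monomial, coeff_monomial]
    by_cases hblock : ∃ j ∈ d.support, p ≤ j ∧ j < p + m
    · obtain ⟨j0, hj0, h1, h2⟩ := hblock
      have hzero : (d.prod fun j e =>
          (if j < p then (X j : MvPolynomial ℕ ℤ) else if j < p + m then 0 else X (j - m)) ^ e)
          = 0 := by
        apply Finset.prod_eq_zero hj0
        show (if j0 < p then (X j0 : MvPolynomial ℕ ℤ) else if j0 < p + m then 0
            else X (j0 - m)) ^ d j0 = 0
        rw [if_neg (by omega), if_pos (by omega)]
        exact zero_pow (Finsupp.mem_support_iff.mp hj0)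
      rw [hzero, mul_zero, coeff_zero, if_neg]
      intro hd
      have hval : Finsupp.mapDomain (sh m p) e j0 = 0 := by
        apply Finsupp.mapDomain_notin_range
        rintro ⟨j, rfl⟩
        unfold sh at h1 h2
        split_ifs at h1 h2 <;> omega
      rw [← hd] at hval
      exact (Finsupp.mem_support_iff.mp hj0) hval
    · push_neg at hblock
      have hd' : ∀ j ∈ d.support, j < p ∨ p + m ≤ j := by
        intro j hj
        by_cases h : j < p
        · exact Or.inl h
        · exact Or.inr (hblock j hj (le_of_not_gt h))
      have hprod : (d.prod fun j e =>
          (if j < p then (X j : MvPolynomial ℕ ℤ) else if j < p + m then 0 else X (j - m)) ^ e)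
          = monomial (Finsupp.mapDomain (sg m p) d) 1 := by
        rw [Finsupp.prod]
        rw [Finset.prod_congr rfl (fun j hj => by
          show (if j < p then (X j : MvPolynomial ℕ ℤ) else if j < p + m then 0
              else X (j - m)) ^ d j = monomial (Finsupp.single (sg m p j) (d j)) 1
          have : (if j < p then (X j : MvPolynomial ℕ ℤ) else if j < p + m then 0 else X (j - m))
              = X (sg m p j) := by
            rcases hd' j hj with h | h
            · rw [if_pos h]; unfold sg; rw [if_pos h]
            · rw [if_neg (by omega), if_neg (by omega)]; unfold sg; rw [if_neg (by omega)]
          rw [this, X_pow_eq_monomial])]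
        rw [prod_monomial]
        rfl
      rw [hprod, algebraMap_eq, C_mul_monomial, mul_one, coeff_monomial]
      by_cases h : Finsupp.mapDomain (sg m p) d = e
      · rw [if_pos h, if_pos]
        rw [← h, mapDomain_sh_sg m p d hd']
      · rw [if_neg h, if_neg]
        intro hcon
        apply h
        rw [hcon, mapDomain_sg_sh]

lemma mapDomain_sum_single (g : ℕ → ℕ) (k : ℕ) (i a : Fin k → ℕ) :
    Finsupp.mapDomain g (∑ l, Finsupp.single (i l) (a l))
      = ∑ l, Finsupp.single (g (i l)) (a l) := by
  rw [Finsupp.mapDomain_finset_sum]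
  exact Finset.sum_congr rfl fun l _ => Finsupp.mapDomain_single

lemma add_m_le {m a b : ℕ} (h : a % m = b % m) (hab : b < a) : b + m ≤ a := by
  have hdvd : m ∣ a - b := (Nat.modEq_iff_dvd' (le_of_lt hab)).mp h.symm
  have := Nat.le_of_dvd (by omega) hdvd
  omega

end MQAux

namespace MQAux

lemma step (m n : ℕ) (hm : 1 ≤ m) (hmn : m ≤ n) (f : MvPolynomial ℕ ℤ)
    (hR : ∀ p q : ℕ, p + m ≤ n → q + m ≤ n → ∀ e : ℕ →₀ ℕ,
      coeff (Finsupp.mapDomain (sh m p) e) f = coeff (Finsupp.mapDomain (sh m q) e) f)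
    (k : ℕ) (a i j : Fin k → ℕ) (hi : StrictMono i) (hj : StrictMono j)
    (hin : ∀ l, i l < n) (hres : ∀ l, i l % m = j l % m)
    (hex : ∃ l, j l < i l) :
    ∃ ι : Fin k → ℕ, StrictMono ι ∧ (∀ l, ι l < n) ∧ (∀ l, ι l % m = i l % m) ∧
      (∑ l, ι l) < (∑ l, i l) ∧
      coeff (∑ l, Finsupp.single (i l) (a l)) f
        = coeff (∑ l, Finsupp.single (ι l) (a l)) f := by
  classical
  -- minimal index where j < i
  have hk : 0 < k := by
    obtain ⟨l, _⟩ := hex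
    exact l.pos
  set S : Finset (Fin k) := Finset.univ.filter (fun l => j l < i l) with hS
  have hSne : S.Nonempty := by
    obtain ⟨l, hl⟩ := hex
    exact ⟨l, by simp [hS, hl]⟩
  set l₀ : Fin k := S.min' hSne with hl₀def
  have hl₀ : j l₀ < i l₀ := by
    have := S.min'_mem hSne
    simpa [hS] using this
  have hmin : ∀ l', l' < l₀ → i l' ≤ j l' := by
    intro l' h
    by_contra h'
    push_neg at h'
    exact absurd (S.min'_le l' (by simp [hS, h'])) (not_le.mpr h)
  have key : j l₀ + m ≤ i l₀ := add_m_le (hres l₀) hl₀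
  have hmi : m ≤ i l₀ := by omega
  have hlt : ∀ l', l' < l₀ → i l' < i l₀ - m := by
    intro l' h
    have h1 := hmin l' h
    have h2 := hj h
    omega
  have hmono : ∀ l', l₀ ≤ l' → i l₀ ≤ i l' := fun l' h => hi.monotone h
  refine ⟨fun l' => if l' < l₀ then i l' else i l' - m, ?_, ?_, ?_, ?_, ?_⟩
  · intro l₁ l₂ h
    by_cases h1 : l₁ < l₀ <;> by_cases h2 : l₂ < l₀ <;>
      simp only [if_pos, if_neg, h1, h2, if_true, if_false]
    · exact hi h
    · have := hlt l₁ h1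
      have := hmono l₂ (le_of_not_gt h2)
      omega
    · exact absurd (h.trans h2) h1
    · have := hmono l₁ (le_of_not_gt h1)
      have := hi h
      omega
  · intro l'
    have := hin l'
    show (if l' < l₀ then i l' else i l' - m) < n
    split_ifs <;> omega
  · intro l'
    show (if l' < l₀ then i l' else i l' - m) % m = i l' % m
    split_ifs with h
    · rfl
    · have hle : m ≤ i l' := le_trans hmi (hmono l' (le_of_not_gt h))
      conv_rhs => rw [← Nat.sub_add_cancel hle]
      rw [Nat.add_mod_right]
  · apply Finset.sum_lt_sum
    · intro l' _
      split_ifs <;> omega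
    · refine ⟨l₀, Finset.mem_univ _, ?_⟩
      rw [if_neg (lt_irrefl l₀)]
      omega
  · have hshι : ∀ l', sh m (i l₀ - m) (if l' < l₀ then i l' else i l' - m) = i l' := by
      intro l'
      unfold sh
      by_cases h : l' < l₀
      · rw [if_pos h, if_pos (hlt l' h)]
      · have h1 := hmono l' (le_of_not_gt h)
        rw [if_neg h, if_neg (by omega)]
        omega
    have hshι2 : ∀ l', sh m (n - m) (if l' < l₀ then i l' else i l' - m)
        = (if l' < l₀ then i l' else i l' - m) := by
      intro l'
      unfold sh
      rw [if_pos]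
      by_cases h : l' < l₀
      · have := hlt l' h
        have := hin l₀
        rw [if_pos h]
        omega
      · have h1 := hmono l' (le_of_not_gt h)
        have := hin l'
        rw [if_neg h]
        omega
    have h1 : (∑ l, Finsupp.single (i l) (a l))
        = Finsupp.mapDomain (sh m (i l₀ - m))
            (∑ l, Finsupp.single (if l < l₀ then i l else i l - m) (a l)) := by
      rw [mapDomain_sum_single]
      exact Finset.sum_congr rfl fun l _ => by rw [hshι l]
    have h2 : Finsupp.mapDomain (sh m (n - m))
          (∑ l, Finsupp.single (if l < l₀ then i l else i l - m) (a l))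
        = (∑ l, Finsupp.single (if l < l₀ then i l else i l - m) (a l)) := by
      rw [mapDomain_sum_single]
      exact Finset.sum_congr rfl fun l _ => by rw [hshι2 l]
    rw [h1, hR (i l₀ - m) (n - m) (by have := hin l₀; omega) (by omega), h2]

lemma qsym_of_hR (m n : ℕ) (hm : 1 ≤ m) (hmn : m ≤ n) (f : MvPolynomial ℕ ℤ)
    (hR : ∀ p q : ℕ, p + m ≤ n → q + m ≤ n → ∀ e : ℕ →₀ ℕ,
      coeff (Finsupp.mapDomain (sh m p) e) f = coeff (Finsupp.mapDomain (sh m q) e) f) :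
    IsMQSym m n f := by
  intro k a ha i j hi hj hin hjn hres
  suffices H : ∀ N (i j : Fin k → ℕ), StrictMono i → StrictMono j →
      (∀ l, i l < n) → (∀ l, j l < n) → (∀ l, i l % m = j l % m) →
      (∑ l, i l) + (∑ l, j l) < N →
      coeff (∑ l, Finsupp.single (i l) (a l)) f
        = coeff (∑ l, Finsupp.single (j l) (a l)) f by
    exact H ((∑ l, i l) + (∑ l, j l) + 1) i j hi hj hin hjn hres (by omega)
  intro N
  induction N with
  | zero => intro i j _ _ _ _ _ h; omega
  | succ N IH =>
    intro i j hi hj hin hjn hres hN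
    by_cases heq : ∀ l, i l = j l
    · exact congrArg (fun d => coeff d f)
        (Finset.sum_congr rfl fun l _ => by rw [heq l])
    · push_neg at heq
      obtain ⟨l₀, hl₀⟩ := heq
      rcases Nat.lt_or_ge (j l₀) (i l₀) with hcase | hcase
      · obtain ⟨ι, hι1, hι2, hι3, hι4, hι5⟩ :=
          step m n hm hmn f hR k a i j hi hj hin hres ⟨l₀, hcase⟩
        rw [hι5]
        exact IH ι j hι1 hj hι2 hjn (fun l => (hι3 l).trans (hres l)) (by omega)
      · have hcase' : i l₀ < j l₀ := lt_of_le_of_ne hcase hl₀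
        obtain ⟨ι, hι1, hι2, hι3, hι4, hι5⟩ :=
          step m n hm hmn f hR k a j i hj hi hjn (fun l => (hres l).symm) ⟨l₀, hcase'⟩
        rw [hι5]
        exact IH i ι hi hι1 hin hι2 (fun l => (hres l).trans (hι3 l).symm) (by omega)

end MQAux

namespace MQAux

lemma hR_of_qsym (m n : ℕ) (hm : 1 ≤ m) (hmn : m ≤ n) (f : MvPolynomial ℕ ℤ)
    (hf : InVars n f) (hq : IsMQSym m n f) :
    ∀ p q : ℕ, p + m ≤ n → q + m ≤ n → ∀ e : ℕ →₀ ℕ,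
      coeff (Finsupp.mapDomain (sh m p) e) f = coeff (Finsupp.mapDomain (sh m q) e) f := by
  intro p q hp hq' e
  by_cases hbig : ∃ j0 ∈ e.support, n - m ≤ j0
  · obtain ⟨j0, hj0, hnj0⟩ := hbig
    have hz : ∀ r : ℕ, r + m ≤ n → coeff (Finsupp.mapDomain (sh m r) e) f = 0 := by
      intro r hr
      by_contra h
      have hmem : Finsupp.mapDomain (sh m r) e ∈ f.support := MvPolynomial.mem_support_iff.mpr h
      have hge : n ≤ sh m r j0 := by
        unfold sh
        split_ifs <;> omega
      have := hf _ hmem (sh m r j0) hge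
      rw [Finsupp.mapDomain_apply (sh_inj m r)] at this
      exact (Finsupp.mem_support_iff.mp hj0) this
    rw [hz p hp, hz q hq']
  · push_neg at hbig
    set k := e.support.card with hk
    set osi := e.support.orderEmbOfFin hk.symm with hosi
    have hmemsup : ∀ l, osi l ∈ e.support := fun l => Finset.orderEmbOfFin_mem _ _ l
    have hsm : StrictMono (fun l => (osi l : ℕ)) := osi.strictMono
    have he : (∑ l : Fin k, Finsupp.single (osi l) (e (osi l))) = e := by
      have h1 : (∑ l : Fin k, Finsupp.single (osi l) (e (osi l)))
          = ∑ x ∈ e.support, Finsupp.single x (e x) := by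
        apply Finset.sum_bij (fun l _ => osi l)
        · intro l _; exact hmemsup l
        · intro l1 _ l2 _ h; exact osi.injective h
        · intro x hx
          have : x ∈ Set.range osi := by
            rw [Finset.range_orderEmbOfFin]
            exact hx
          obtain ⟨l, hl⟩ := this
          exact ⟨l, Finset.mem_univ l, hl⟩
        · intro l _; rfl
      rw [h1]
      exact Finsupp.sum_single e
    rw [← he, mapDomain_sum_single, mapDomain_sum_single]
    refine hq k (fun l => e (osi l)) ?_ _ _ ?_ ?_ ?_ ?_ ?_
    · intro l
      exact Nat.one_le_iff_ne_zero.mpr (Finsupp.mem_support_iff.mp (hmemsup l))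
    · exact (sh_strictMono m p).comp hsm
    · exact (sh_strictMono m q).comp hsm
    · intro l
      have := hbig (osi l) (hmemsup l)
      unfold sh
      split_ifs <;> omega
    · intro l
      have := hbig (osi l) (hmemsup l)
      unfold sh
      split_ifs <;> omega
    · intro l
      show sh m p (osi l) % m = sh m q (osi l) % m
      rw [sh_mod, sh_mod]

lemma char (m n : ℕ) (hm : 1 ≤ m) (hmn : m ≤ n) (f : MvPolynomial ℕ ℤ) (hf : InVars n f) :
    IsMQSym m n f ↔
      ∀ i j, 1 ≤ i → i + m ≤ n + 1 → 1 ≤ j → j + m ≤ n + 1 → Rm m i f = Rm m j f := by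
  constructor
  · intro hq i j hi1 hi2 hj1 hj2
    obtain ⟨p, rfl⟩ : ∃ p, i = p + 1 := ⟨i - 1, by omega⟩
    obtain ⟨q, rfl⟩ : ∃ q, j = q + 1 := ⟨j - 1, by omega⟩
    apply MvPolynomial.ext
    intro e
    rw [coeff_Rm, coeff_Rm]
    exact hR_of_qsym m n hm hmn f hf hq p q (by omega) (by omega) e
  · intro hRR
    apply qsym_of_hR m n hm hmn f
    intro p q hp hq e
    have := congrArg (coeff e) (hRR (p+1) (q+1) (by omega) (by omega) (by omega) (by omega))
    rwa [coeff_Rm, coeff_Rm] at this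

end MQAux


/-- `QSym^(m)_n` is closed under multiplication; more
precisely, `f ∈ ℤ[x_1,…,x_n]` is `m`-quasisymmetric iff
`R_1^m f = R_2^m f = ⋯ = R_{n-m+1}^m f`. -/
theorem mqsym_ring_and_characterization (m n : ℕ) (hm : 1 ≤ m) (hmn : m ≤ n) :
    (∀ f g : MvPolynomial ℕ ℤ, InVars n f → InVars n g →
      IsMQSym m n f → IsMQSym m n g → IsMQSym m n (f * g)) ∧
    (∀ f : MvPolynomial ℕ ℤ, InVars n f →
      (IsMQSym m n f ↔
        ∀ i j, 1 ≤ i → i + m ≤ n + 1 → 1 ≤ j → j + m ≤ n + 1 →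
          Rm m i f = Rm m j f)) := by
  constructor
  · intro f g hf hg hqf hqg
    classical
    have hfg : InVars n (f * g) := by
      intro d hd j hj
      have hsub := MvPolynomial.support_mul f g hd
      rw [Finset.mem_add] at hsub
      obtain ⟨u, hu, v, hv, huv⟩ := hsub
      rw [← huv, Finsupp.add_apply, hf u hu j hj, hg v hv j hj]
    rw [MQAux.char m n hm hmn (f * g) hfg]
    intro i j hi1 hi2 hj1 hj2
    rw [map_mul, map_mul,
      (MQAux.char m n hm hmn f hf).mp hqf i j hi1 hi2 hj1 hj2,
      (MQAux.char m n hm hmn g hg).mp hqg i j hi1 hi2 hj1 hj2]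
  · intro f hf
    exact MQAux.char m n hm hmn f hf
end

section
/- For any monomial x^c with exponent vector c = (c_1,...,c_n) satisfying c_{m+1} = c_{m+2} = ... = 0 (i.e., only the first m variables appear), the m-forest polynomial of the unique m-indexed forest with code c equals the monomial x^c itself. -/
open MvPolynomial

/-- `(m+1)`-ary rooted plane trees: each node has `0` or `m+1` ordered
children. -/
inductive MTree (m : ℕ) : Type
  | leaf : MTree m
  | node : (Fin (m + 1) → MTree m) → MTree m

/-- Number of leaves. -/
def MTree.mleaves {m : ℕ} : MTree m → ℕ
  | .leaf => 1
  | .node ch => ∑ i, (ch i).mleaves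

/-- The number of leaves strictly to the left of the `i`-th child. -/
def childOffset {m : ℕ} (ch : Fin (m + 1) → MTree m) (i : Fin (m + 1)) : ℕ :=
  ∑ j ∈ Finset.univ.filter (· < i), (ch j).mleaves

/-- The code of a single `(m+1)`-ary tree whose leftmost leaf is labeled `k`
(1-based leaf labels): every internal node `v` contributes `1` at the index
`ρ(v)`, the label of the leaf reached from `v` along leftmost edges. -/
noncomputable def mcode {m : ℕ} : MTree m → ℕ → (ℕ →₀ ℕ)
  | .leaf, _ => 0
  | .node ch, k => Finsupp.single k 1 + ∑ i, mcode (ch i) (k + childOffset ch i)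

/-- Generating function of the compatible labelings of a tree whose leftmost
leaf is labeled `k`, with all labels bounded below by `b`: labels `κ(v)` are
positive integers with `κ(v) ≤ ρ(v)`, `κ(v) ≡ ρ(v) (mod m)`, and
`κ(v) ≤ κ(v_i) - i` for each internal `i`-th child `v_i`. -/
noncomputable def mgen (m : ℕ) : MTree m → ℕ → ℕ → MvPolynomial ℕ ℤ
  | .leaf, _, _ => 1
  | .node ch, k, b =>
      ∑ c ∈ (Finset.Icc 1 k).filter (fun c => c % m = k % m ∧ b ≤ c),
        X c * ∏ i, mgen m (ch i) (k + childOffset ch i) (c + (i : ℕ))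

/-- The leftmost leaf label (1-based) of the `i`-th tree of a forest. -/
def moffset {m : ℕ} (F : ℕ → MTree m) (i : ℕ) : ℕ :=
  1 + ∑ j ∈ Finset.range i, (F j).mleaves

/-- The `m`-forest polynomial `P_F = Σ_{κ ∈ Comp(F)} Π_v x_{κ(v)}`
(the variable `x_c` is `X c`, `c ≥ 1`). -/
noncomputable def mforestPoly {m : ℕ} (F : ℕ → MTree m) : MvPolynomial ℕ ℤ :=
  ∏ᶠ i, mgen m (F i) (moffset F i) 1

/-- The code of an `m`-indexed forest. -/
noncomputable def mcodeF {m : ℕ} (F : ℕ → MTree m) : ℕ →₀ ℕ :=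
  ∑ᶠ i, mcode (F i) (moffset F i)

lemma MTree.one_le_mleaves {m : ℕ} (t : MTree m) : 1 ≤ t.mleaves := by
  induction t with
  | leaf => simp [MTree.mleaves]
  | node ch ih =>
    have : 0 < ∑ i, (ch i).mleaves :=
      Finset.sum_pos (fun i _ => ih i) ⟨0, Finset.mem_univ 0⟩
    simp only [MTree.mleaves]
    exact this

lemma le_childOffset {m : ℕ} (ch : Fin (m + 1) → MTree m) (i : Fin (m + 1)) :
    (i : ℕ) ≤ childOffset ch i := by
  classical
  calc (i : ℕ) = ∑ _j ∈ Finset.univ.filter (· < i), 1 := by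
        rw [Finset.sum_const, smul_eq_mul, mul_one]
        rw [show Finset.univ.filter (· < i) = Finset.Iio i from Finset.filter_gt_eq_Iio]
        exact (Fin.card_Iio i).symm
    _ ≤ childOffset ch i :=
        Finset.sum_le_sum fun j _ => (ch j).one_le_mleaves

lemma prod_monomial_one {ι : Type*} (s : Finset ι) (f : ι → (ℕ →₀ ℕ)) :
    ∏ i ∈ s, (monomial (f i) (1 : ℤ)) = monomial (∑ i ∈ s, f i) 1 := by
  classical
  induction s using Finset.induction with
  | empty => simp
  | @insert a s h ih => simp [Finset.prod_insert h, Finset.sum_insert h, ih, monomial_mul]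

lemma key (m : ℕ) (hm : 1 ≤ m) (t : MTree m) : ∀ k b : ℕ, 1 ≤ b → b ≤ k →
    (∀ i, m < i → mcode t k i = 0) → mgen m t k b = monomial (mcode t k) 1 := by
  induction t with
  | leaf => intro k b _ _ _; simp [mgen, mcode]
  | node ch ih =>
    intro k b hb hbk hc
    have hk1 : 1 ≤ k := le_trans hb hbk
    -- each child's code vanishes above m, and k ≤ m
    have hterm : ∀ j, m < j →
        (Finsupp.single k 1) j = 0 ∧
        ∀ i : Fin (m+1), mcode (ch i) (k + childOffset ch i) j = 0 := by
      intro j hj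
      have h0 := hc j hj
      rw [mcode] at h0
      rw [Finsupp.add_apply, Finsupp.finset_sum_apply] at h0
      obtain ⟨h1, h2⟩ := Nat.add_eq_zero.mp h0
      exact ⟨h1, fun i => Finset.sum_eq_zero_iff.mp h2 i (Finset.mem_univ i)⟩
    have hkm : k ≤ m := by
      by_contra h
      push_neg at h
      have := (hterm k h).1
      simp [Finsupp.single_apply] at this
    -- the filter is the singleton {k}
    have hfilter : (Finset.Icc 1 k).filter (fun c => c % m = k % m ∧ b ≤ c)
        = {k} := by
      ext c
      simp only [Finset.mem_filter, Finset.mem_Icc, Finset.mem_singleton]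
      constructor
      · rintro ⟨⟨hc1, hck⟩, hmod, _⟩
        rcases eq_or_lt_of_le hkm with hkm' | hkm'
        · subst hkm'
          rw [Nat.mod_self] at hmod
          rcases eq_or_lt_of_le hck with h | h
          · exact h
          · rw [Nat.mod_eq_of_lt h] at hmod; omega
        · rw [Nat.mod_eq_of_lt hkm', Nat.mod_eq_of_lt (lt_of_le_of_lt hck hkm')] at hmod
          exact hmod
      · rintro rfl
        exact ⟨⟨hk1, le_refl _⟩, rfl, hbk⟩
    rw [mgen, hfilter, Finset.sum_singleton]
    have hch : ∀ i : Fin (m+1),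
        mgen m (ch i) (k + childOffset ch i) (k + (i : ℕ))
          = monomial (mcode (ch i) (k + childOffset ch i)) 1 := by
      intro i
      refine ih i (k + childOffset ch i) (k + (i : ℕ)) (by omega)
        (by have := le_childOffset ch i; omega) ?_
      intro j hj
      exact (hterm j hj).2 i
    calc X k * ∏ i, mgen m (ch i) (k + childOffset ch i) (k + (i : ℕ))
        = monomial (Finsupp.single k 1) 1 *
            ∏ i, (monomial (mcode (ch i) (k + childOffset ch i)) (1 : ℤ)) := by
          rw [← X_pow_eq_monomial, pow_one]
          congr 1
          exact Finset.prod_congr rfl fun i _ => hch i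
      _ = monomial (mcode (MTree.node ch) k) 1 := by
          rw [prod_monomial_one, monomial_mul, one_mul, mcode]

/-- If the code of an `m`-indexed forest is supported on the
first `m` indices (i.e. `c_i = 0` for `i > m`), then its `m`-forest polynomial
is exactly the monomial `x^c`. -/
theorem mforest_poly_of_small_code (m : ℕ) (hm : 1 ≤ m) (F : ℕ → MTree m)
    (hF : {i | F i ≠ MTree.leaf}.Finite)
    (hc : ∀ i, m < i → mcodeF F i = 0) :
    mforestPoly F = monomial (mcodeF F) 1 := by
  classical
  set S : Finset ℕ := hF.toFinset with hS
  have hgen : ∀ i ∉ S, mgen m (F i) (moffset F i) 1 = 1 := by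
    intro i hi
    have : F i = MTree.leaf := by simpa [hS] using hi
    rw [this, mgen]
  have hcode : ∀ i ∉ S, mcode (F i) (moffset F i) = 0 := by
    intro i hi
    have : F i = MTree.leaf := by simpa [hS] using hi
    rw [this, mcode]
  have hprod : mforestPoly F = ∏ i ∈ S, mgen m (F i) (moffset F i) 1 := by
    refine finprod_eq_prod_of_mulSupport_subset _ ?_
    intro i hi
    by_contra h
    exact hi (hgen i h)
  have hsum : mcodeF F = ∑ i ∈ S, mcode (F i) (moffset F i) := by
    refine finsum_eq_sum_of_support_subset _ ?_
    intro i hi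
    by_contra h
    exact hi (hcode i h)
  have hcS : ∀ i ∈ S, ∀ j, m < j → mcode (F i) (moffset F i) j = 0 := by
    intro i hi j hj
    have h0 := hc j hj
    rw [hsum, Finsupp.finset_sum_apply] at h0
    exact Finset.sum_eq_zero_iff.mp h0 i hi
  rw [hprod, hsum]
  rw [← prod_monomial_one]
  refine Finset.prod_congr rfl fun i hi => ?_
  exact key m hm (F i) (moffset F i) 1 le_rfl (Nat.le_add_right 1 _) (hcS i hi)
end
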